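/- Let F : ℝ³ → ℝ be nondecreasing in each variable, let Φ(a,b) be a numerical entropy flux satisfying Φ(a,b) = G(a∨k, b∨k) − G(a∧k, b∧k) for a fixed k with F(v₋,v,v₊) = v − (Δt/Δx)(G(v,v₊) − G(v₋,v)) and F(k,k,k)=k. Then for all v₋, v, v₊: |F(v₋,v,v₊) − k| ≤ |v − k| − (Δt/Δx)(Φ(v,v₊) − Φ(v₋,v)). (Discrete Kruzhkov entropy inequality for monotone three-point schemes.) -/
import Mathlib

open Set

/-- Discrete Kruzhkov entropy inequality for monotone three-point schemes. -/
theorem discrete_entropy_inequality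
    (Δt Δx k : ℝ) (hΔt : 0 < Δt) (hΔx : 0 < Δx)
    (G : ℝ → ℝ → ℝ)
    (hG1 : ∀ b, Monotone fun a => G a b) (hG2 : ∀ a, Antitone fun b => G a b)
    (F : ℝ → ℝ → ℝ → ℝ)
    (hF : ∀ u v w, F u v w = v - (Δt / Δx) * (G v w - G u v))
    (hFmono1 : ∀ v w, Monotone fun u => F u v w)
    (hFmono2 : ∀ u w, Monotone fun v => F u v w)
    (hFmono3 : ∀ u v, Monotone fun w => F u v w)
    (hFk : F k k k = k)
    (Phi : ℝ → ℝ → ℝ)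
    (hPhi : ∀ a b, Phi a b = G (max a k) (max b k) - G (min a k) (min b k)) :
    ∀ vm v vp : ℝ, |F vm v vp - k| ≤ |v - k| - (Δt / Δx) * (Phi v vp - Phi vm v) := by
  intro vm v vp
  have hmaxle : max (F vm v vp) k ≤ F (max vm k) (max v k) (max vp k) := by
    apply max_le
    · exact le_trans (hFmono1 v vp (le_max_left vm k))
        (le_trans (hFmono2 (max vm k) vp (le_max_left v k))
          (hFmono3 (max vm k) (max v k) (le_max_left vp k)))
    · calc k = F k k k := hFk.symm
        _ ≤ _ := le_trans (hFmono1 k k (le_max_right vm k))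
          (le_trans (hFmono2 (max vm k) k (le_max_right v k))
            (hFmono3 (max vm k) (max v k) (le_max_right vp k)))
  have hminge : F (min vm k) (min v k) (min vp k) ≤ min (F vm v vp) k := by
    apply le_min
    · exact le_trans (hFmono1 (min v k) (min vp k) (min_le_left vm k))
        (le_trans (hFmono2 vm (min vp k) (min_le_left v k))
          (hFmono3 vm v (min_le_left vp k)))
    · calc F (min vm k) (min v k) (min vp k)
          ≤ F k k k := le_trans (hFmono1 (min v k) (min vp k) (min_le_right vm k))
            (le_trans (hFmono2 k (min vp k) (min_le_right v k))
              (hFmono3 k k (min_le_right vp k)))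
        _ = k := hFk
  have key : F (max vm k) (max v k) (max vp k) - F (min vm k) (min v k) (min vp k)
      = |v - k| - (Δt / Δx) * (Phi v vp - Phi vm v) := by
    have habs : |v - k| = max v k - min v k := by
      rw [max_sub_min_eq_abs, abs_sub_comm]
    rw [hF, hF, hPhi, hPhi, habs]
    ring
  calc |F vm v vp - k| = max (F vm v vp) k - min (F vm v vp) k := by
        rw [max_sub_min_eq_abs, abs_sub_comm]
    _ ≤ F (max vm k) (max v k) (max vp k) - F (min vm k) (min v k) (min vp k) :=
        sub_le_sub hmaxle hminge
    _ = _ := key
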